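/- For every integer k ≥ 1 there exists a 2-player cake-cutting instance in class X(k) such that some k-piece allocation (each player receiving exactly the k pieces he owns) has utilitarian welfare 2, while every contiguous allocation has utilitarian welfare at most 2k/(2k−1). Consequently the ratio of optimal k-piece utilitarian welfare to optimal contiguous utilitarian welfare for this instance equals 2 − 1/k. -/

import Mathlib

open MeasureTheory Set intervalIntegral Finset

noncomputable def tent (a b x : ℝ) : ℝ := (8/(b-a)) * max 0 (min (x-a) (b-x))

lemma tent_cont (a b : ℝ) : Continuous (tent a b) := by
  unfold tent
  exact continuous_const.mul (continuous_const.max ((continuous_id.sub continuous_const).min (continuous_const.sub continuous_id)))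

lemma tent_nonneg {a b : ℝ} (hab : a ≤ b) (x : ℝ) : 0 ≤ tent a b x := by
  unfold tent
  apply mul_nonneg (div_nonneg (by norm_num) (by linarith)) (le_max_left _ _)

lemma tent_zero_left {a b x : ℝ} (hx : x ≤ a) : tent a b x = 0 := by
  unfold tent
  rw [max_eq_left, mul_zero]
  exact min_le_of_left_le (by linarith)

lemma tent_zero_right {a b x : ℝ} (hx : b ≤ x) : tent a b x = 0 := by
  unfold tent
  rw [max_eq_left, mul_zero]
  exact min_le_of_right_le (by linarith)

lemma tent_intble (a b u v : ℝ) : IntervalIntegrable (tent a b) volume u v :=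
  (tent_cont a b).intervalIntegrable u v

lemma tent_integral {a b : ℝ} (hab : a < b) :
    ∫ x in a..b, tent a b x = 2*(b-a) := by
  set m := (a+b)/2 with hm
  have ham : a ≤ m := by simp only [hm]; linarith
  have hmb : m ≤ b := by simp only [hm]; linarith
  have h1 : ∫ x in a..m, tent a b x = ∫ x in a..m, (8/(b-a)) * (x-a) := by
    apply integral_congr
    intro x hx
    rw [uIcc_of_le ham] at hx
    unfold tent
    rw [min_eq_left (by simp only [hm] at hx ⊢; cases hx; linarith),
        max_eq_right (by cases hx; linarith)]
  have h2 : ∫ x in m..b, tent a b x = ∫ x in m..b, (8/(b-a)) * (b-x) := by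
    apply integral_congr
    intro x hx
    rw [uIcc_of_le hmb] at hx
    unfold tent
    rw [min_eq_right (by simp only [hm] at hx ⊢; cases hx; linarith),
        max_eq_right (by cases hx; linarith)]
  have key : (∫ x in a..m, tent a b x) + ∫ x in m..b, tent a b x = ∫ x in a..b, tent a b x :=
    integral_add_adjacent_intervals (tent_intble a b a m) (tent_intble a b m b)
  rw [← key, h1, h2]
  have e1 : ∫ x in a..m, (8/(b-a)) * (x-a) = (8/(b-a)) * ((m^2-a^2)/2 - a*(m-a)) := by
    rw [intervalIntegral.integral_const_mul, intervalIntegral.integral_sub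
      (intervalIntegrable_id) (intervalIntegrable_const), integral_id, intervalIntegral.integral_const, smul_eq_mul]
    ring
  have e2 : ∫ x in m..b, (8/(b-a)) * (b-x) = (8/(b-a)) * (b*(b-m) - (b^2-m^2)/2) := by
    rw [intervalIntegral.integral_const_mul, intervalIntegral.integral_sub
      (intervalIntegrable_const) (intervalIntegrable_id), integral_id, intervalIntegral.integral_const, smul_eq_mul]
    ring
  rw [e1, e2]
  have hba : b - a ≠ 0 := by linarith
  field_simp [hm]
  ring

noncomputable def cc (k : ℕ) (j : ℕ) : ℝ :=
  if j = 0 then 0 else if 2*k ≤ j then 1 else ((2*j : ℝ) - 1)/(2*((2*k : ℝ) - 1))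

lemma hNpos {k : ℕ} (hk : 1 ≤ k) : (0:ℝ) < (2*k : ℝ) - 1 := by
  have : (1:ℝ) ≤ (k:ℝ) := by exact_mod_cast hk
  linarith

lemma cc_zero (k : ℕ) : cc k 0 = 0 := by simp [cc]

lemma cc_last {k : ℕ} (hk : 1 ≤ k) : cc k (2*k) = 1 := by
  have h0 : 2*k ≠ 0 := by omega
  simp [cc, h0]

lemma cc_formula {k j : ℕ} (h1 : 1 ≤ j) (h2 : j ≤ 2*k-1) :
    cc k j = ((2*j : ℝ) - 1)/(2*((2*k : ℝ) - 1)) := by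
  have hj0 : j ≠ 0 := by omega
  have hjk : ¬ (2*k ≤ j) := by omega
  simp [cc, hj0, hjk]

lemma cc_nonneg {k : ℕ} (hk : 1 ≤ k) (j : ℕ) : 0 ≤ cc k j := by
  unfold cc
  have hN := hNpos hk
  split
  · exact le_refl 0
  split
  · norm_num
  · apply div_nonneg _ (by linarith)
    have : (1:ℝ) ≤ (j:ℝ) := by exact_mod_cast Nat.one_le_iff_ne_zero.2 ‹_›
    linarith

lemma cc_le_one {k : ℕ} (hk : 1 ≤ k) (j : ℕ) : cc k j ≤ 1 := by
  unfold cc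
  have hN := hNpos hk
  split
  · norm_num
  split
  · exact le_refl 1
  · rw [div_le_one (by linarith)]
    have hj : j ≤ 2*k - 1 := by omega
    have : (j:ℝ) ≤ (2*k : ℝ) - 1 := by
      have : (j:ℝ) ≤ ((2*k-1 : ℕ) : ℝ) := by exact_mod_cast hj
      have h2 : ((2*k-1 : ℕ) : ℝ) = (2*k : ℝ) - 1 := by
        have : 1 ≤ 2*k := by omega
        push_cast [this]
        ring
      linarith
    linarith

lemma cc_lt {k : ℕ} (hk : 1 ≤ k) {j j' : ℕ} (h : j < j') (h2 : j' ≤ 2*k) :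
    cc k j < cc k j' := by
  have hN := hNpos hk
  rcases Nat.eq_zero_or_pos j with hj0 | hj1
  · subst hj0
    rw [cc_zero]
    rcases eq_or_lt_of_le h2 with he | hlt
    · subst he; rw [cc_last hk]; norm_num
    · rw [cc_formula (by omega) (by omega)]
      apply div_pos _ (by linarith)
      have : (1:ℝ) ≤ (j':ℝ) := by exact_mod_cast h
      linarith
  · rcases eq_or_lt_of_le h2 with he | hlt
    · subst he
      rw [cc_last hk, cc_formula (by omega) (by omega), div_lt_one (by linarith)]
      have : (j:ℝ) ≤ (2*k:ℝ) - 1 := by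
        have hj : (j:ℝ) + 1 ≤ (2*k:ℝ) := by exact_mod_cast h
        linarith
      linarith
    · rw [cc_formula (by omega) (by omega), cc_formula (by omega) (by omega)]
      rw [div_lt_div_iff_of_pos_right (by linarith)]
      have : (j:ℝ) < (j':ℝ) := by exact_mod_cast h
      linarith

lemma cc_mono {k : ℕ} (hk : 1 ≤ k) {j j' : ℕ} (h : j ≤ j') : cc k j ≤ cc k j' := by
  rcases eq_or_lt_of_le h with rfl | hlt
  · exact le_refl _
  rcases le_or_gt j' (2*k) with h2 | h2
  · exact (cc_lt hk hlt h2).le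
  · have hj0 : j' ≠ 0 := by omega
    have hj2 : 2*k ≤ j' := by omega
    have hcc : cc k j' = 1 := by simp [cc, hj0, hj2]
    rw [hcc]; exact cc_le_one hk j

lemma cc_len {k : ℕ} (hk : 1 ≤ k) {j : ℕ} (hj : j < 2*k) :
    cc k (j+1) - cc k j = if j = 0 ∨ j = 2*k-1 then 1/(2*((2*k:ℝ)-1)) else 1/((2*k:ℝ)-1) := by
  have hN := hNpos hk
  rcases eq_or_ne j 0 with rfl | hj0
  · rw [cc_zero, cc_formula (by omega) (by omega : 0+1 ≤ 2*k-1)]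
    simp only [if_pos (Or.inl rfl)]
    norm_num
  · rcases eq_or_ne j (2*k-1) with hje | hjn
    · subst hje
      rw [show 2*k-1+1 = 2*k by omega, cc_last hk, cc_formula (by omega) (le_refl _)]
      rw [if_pos (Or.inr rfl)]
      have hc : ((2*k-1 : ℕ) : ℝ) = (2*k:ℝ) - 1 := by
        have h1 : 1 ≤ 2*k := by omega
        push_cast [h1]; ring
      rw [hc]
      field_simp
      ring
    · rw [cc_formula (by omega) (by omega), cc_formula (by omega) (by omega),
        if_neg (show ¬(j = 0 ∨ j = 2*k-1) by tauto)]
      push_cast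
      rw [div_sub_div_same, show (2*((j:ℝ)+1)-1) - (2*(j:ℝ)-1) = 2 from by ring]
      rw [div_eq_div_iff (by linarith) (by linarith)]
      ring

lemma cc_len_pos {k : ℕ} (hk : 1 ≤ k) {j : ℕ} (hj : j < 2*k) : cc k j < cc k (j+1) :=
  cc_lt hk (Nat.lt_succ_self j) (by omega)

/-- the density of player `i ∈ {0,1}` -/
noncomputable def dd (k : ℕ) (i : ℕ) (x : ℝ) : ℝ :=
  ∑ j ∈ Finset.range (2*k), if j % 2 = i then tent (cc k j) (cc k (j+1)) x else 0

lemma dd_cont (k i : ℕ) : Continuous (dd k i) := by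
  apply continuous_finset_sum
  intro j _
  by_cases h : j % 2 = i
  · simpa [h] using tent_cont (cc k j) (cc k (j+1))
  · simpa [h] using continuous_const

lemma dd_nonneg {k : ℕ} (hk : 1 ≤ k) (i : ℕ) (x : ℝ) : 0 ≤ dd k i x := by
  apply Finset.sum_nonneg
  intro j hj
  rw [Finset.mem_range] at hj
  by_cases h : j % 2 = i
  · simpa [h] using tent_nonneg (cc_len_pos hk hj).le x
  · simp [h]

lemma dd_intble (k i : ℕ) (u v : ℝ) : IntervalIntegrable (dd k i) volume u v :=
  (dd_cont k i).intervalIntegrable u v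

/-- dd vanishes pointwise on unowned closed pieces -/
lemma dd_zero_on {k : ℕ} (hk : 1 ≤ k) {i j : ℕ} (hj : j < 2*k) (hji : j % 2 ≠ i)
    {x : ℝ} (hx : x ∈ Set.Icc (cc k j) (cc k (j+1))) : dd k i x = 0 := by
  apply Finset.sum_eq_zero
  intro j' hj'
  rw [Finset.mem_range] at hj'
  by_cases h : j' % 2 = i
  · have hne : j' ≠ j := fun he => hji (he ▸ h)
    rcases lt_or_gt_of_ne hne with hlt | hgt
    · have : cc k (j'+1) ≤ cc k j := cc_mono hk (by omega)
      simp [h, tent_zero_right (le_trans this hx.1)]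
    · have : cc k (j+1) ≤ cc k j' := cc_mono hk (by omega)
      simp [h, tent_zero_left (le_trans hx.2 this)]
  · simp [h]

/-- integral of the density over a single piece -/
lemma dd_piece_integral {k : ℕ} (hk : 1 ≤ k) (i : ℕ) {j : ℕ} (hj : j < 2*k) :
    ∫ x in (cc k j)..(cc k (j+1)), dd k i x
      = if j % 2 = i then 2*(cc k (j+1) - cc k j) else 0 := by
  by_cases h : j % 2 = i
  · unfold dd
    rw [intervalIntegral.integral_finset_sum
      (fun j' _ => by
        by_cases h' : j' % 2 = i
        · simpa [h'] using tent_intble (cc k j') (cc k (j'+1)) (cc k j) (cc k (j+1))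
        · simpa [h'] using intervalIntegrable_const)]
    rw [Finset.sum_eq_single j]
    · simp [h, tent_integral (cc_len_pos hk hj)]
    · intro j' hj' hne
      rw [Finset.mem_range] at hj'
      by_cases h' : j' % 2 = i
      · simp only [h', if_true]
        apply intervalIntegral.integral_congr (g := fun _ => 0) ?_ |>.trans (by simp)
        intro x hx
        rw [uIcc_of_le (cc_len_pos hk hj).le] at hx
        rcases lt_or_gt_of_ne hne with hlt | hgt
        · exact tent_zero_right (le_trans (cc_mono hk (by omega)) hx.1)
        · exact tent_zero_left (le_trans hx.2 (cc_mono hk (by omega)))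
      · simp [h']
    · intro hmem
      exact absurd (Finset.mem_range.2 hj) hmem
  · simp only [h, if_false]
    apply intervalIntegral.integral_congr (g := fun _ => 0) ?_ |>.trans (by simp)
    intro x hx
    rw [uIcc_of_le (cc_len_pos hk hj).le] at hx
    exact dd_zero_on hk hj h hx

/-- cumulative value -/
noncomputable def FF (k i : ℕ) (t : ℝ) : ℝ := ∫ x in (0:ℝ)..t, dd k i x

lemma FF_zero (k i : ℕ) : FF k i 0 = 0 := by simp [FF]

lemma FF_cc_succ {k : ℕ} (hk : 1 ≤ k) (i : ℕ) {j : ℕ} (hj : j < 2*k) :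
    FF k i (cc k (j+1)) = FF k i (cc k j)
      + (if j % 2 = i then 2*(cc k (j+1) - cc k j) else 0) := by
  rw [← dd_piece_integral hk i hj]
  unfold FF
  rw [intervalIntegral.integral_add_adjacent_intervals (dd_intble k i _ _) (dd_intble k i _ _)]

lemma FF_mono {k : ℕ} (hk : 1 ≤ k) (i : ℕ) {u v : ℝ} (huv : u ≤ v) :
    FF k i u ≤ FF k i v := by
  unfold FF
  rw [← intervalIntegral.integral_add_adjacent_intervals (dd_intble k i 0 u) (dd_intble k i u v)]
  have : 0 ≤ ∫ x in u..v, dd k i x :=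
    intervalIntegral.integral_nonneg huv (fun x _ => dd_nonneg hk i x)
  linarith

/-- split a sum over `range (2*K)` into pairs -/
lemma sum_pair' {M : Type*} [AddCommMonoid M] (f : ℕ → M) (K : ℕ) :
    ∑ j ∈ Finset.range (2*K), f j = ∑ m ∈ Finset.range K, (f (2*m) + f (2*m+1)) := by
  induction K with
  | zero => simp
  | succ K ih =>
    rw [show 2*(K+1) = (2*K+1)+1 by ring, Finset.sum_range_succ, Finset.sum_range_succ,
      Finset.sum_range_succ, ih, add_assoc]

lemma piece_val {k : ℕ} (hk : 1 ≤ k) {j : ℕ} (hj : j < 2*k) :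
    2*(cc k (j+1) - cc k j)
      = (if j = 0 ∨ j = 2*k-1 then 1 else 2)/((2*k:ℝ)-1) := by
  have hN := hNpos hk
  rw [cc_len hk hj]
  split <;> field_simp

/-- total value of each player's own pieces -/
lemma sum_owned {k : ℕ} (hk : 1 ≤ k) {i : ℕ} (hi : i < 2) :
    ∑ m ∈ Finset.range k, 2*(cc k (2*m+i+1) - cc k (2*m+i)) = 1 := by
  have hN := hNpos hk
  obtain ⟨k', rfl⟩ : ∃ k', k = k' + 1 := ⟨k-1, by omega⟩
  interval_cases i
  · simp only [Nat.add_zero]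
    rw [Finset.sum_range_succ']
    have hrest : ∀ m ∈ Finset.range k',
        2*(cc (k'+1) (2*(m+1)+1) - cc (k'+1) (2*(m+1))) = 2/((2*(k'+1):ℝ)-1) := by
      intro m hm
      rw [Finset.mem_range] at hm
      rw [piece_val hk (by omega), if_neg (by omega)]
      push_cast
      ring
    rw [Finset.sum_congr rfl hrest, Finset.sum_const, Finset.card_range, nsmul_eq_mul,
      piece_val hk (by omega), if_pos (by omega)]
    push_cast
    ring_nf
    field_simp [show (1:ℝ)+(k':ℝ)*2 ≠ 0 by positivity]
    ring
  · rw [Finset.sum_range_succ]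
    have hrest : ∀ m ∈ Finset.range k',
        2*(cc (k'+1) (2*m+1+1) - cc (k'+1) (2*m+1)) = 2/((2*(k'+1):ℝ)-1) := by
      intro m hm
      rw [Finset.mem_range] at hm
      rw [piece_val hk (by omega), if_neg (by omega)]
      push_cast
      ring
    rw [Finset.sum_congr rfl hrest, Finset.sum_const, Finset.card_range, nsmul_eq_mul,
      piece_val hk (by omega), if_pos (Or.inr (by omega))]
    push_cast
    ring_nf
    field_simp [show (1:ℝ)+(k':ℝ)*2 ≠ 0 by positivity]
    ring

/-- closed form for the welfare-difference at cut points -/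
lemma Dv_cc {k : ℕ} (hk : 1 ≤ k) : ∀ j, j ≤ 2*k →
    FF k 0 (cc k j) - FF k 1 (cc k j)
      = if j = 0 ∨ j = 2*k then 0 else (-1:ℝ)^(j+1) / ((2*k:ℝ)-1) := by
  have hN := hNpos hk
  intro j
  induction j with
  | zero => intro _; simp [cc_zero, FF_zero]
  | succ j ih =>
    intro hj1
    have hj : j < 2*k := by omega
    have h0 := FF_cc_succ hk 0 hj
    have h1 := FF_cc_succ hk 1 hj
    have hv := piece_val hk hj
    have ihv := ih (by omega)
    rw [h0, h1]
    rcases Nat.even_or_odd j with he | ho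
    · have hm0 : j % 2 = 0 := Nat.even_iff.1 he
      have hm1 : ¬ (j % 2 = 1) := by omega
      rw [if_pos hm0, if_neg hm1]
      rcases eq_or_ne j 0 with rfl | hj0
      · rw [if_pos (Or.inl rfl)] at hv
        rw [if_pos (Or.inl rfl)] at ihv
        rw [if_neg (by omega), show ((0:ℕ)+1+1) = 2 from rfl, show ((-1:ℝ)^2) = 1 by norm_num]
        linear_combination ihv + hv
      · have hne : j ≠ 2*k-1 := by omega
        rw [if_neg (by tauto)] at hv
        rw [if_neg (by omega)] at ihv
        rw [if_neg (by omega)]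
        have hp : (-1:ℝ)^(j+1) = -1 := by
          rw [pow_succ, he.neg_one_pow]; norm_num
        have hp2 : (-1:ℝ)^(j+1+1) = 1 := by
          rw [pow_succ, hp]; norm_num
        rw [hp] at ihv
        rw [hp2]
        linear_combination ihv + hv
    · have hm1 : j % 2 = 1 := Nat.odd_iff.1 ho
      have hm0 : ¬ (j % 2 = 0) := by omega
      rw [if_pos hm1, if_neg hm0]
      have hj0 : j ≠ 0 := by omega
      have hp : (-1:ℝ)^(j+1) = 1 := (ho.add_one).neg_one_pow
      rw [if_neg (by omega)] at ihv
      rw [hp] at ihv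
      rcases eq_or_ne j (2*k-1) with hje | hjn
      · rw [if_pos (Or.inr hje)] at hv
        rw [if_pos (Or.inr (by omega))]
        linear_combination ihv - hv
      · rw [if_neg (by tauto)] at hv
        rw [if_neg (by omega)]
        have hp2 : (-1:ℝ)^(j+1+1) = -1 := by
          rw [pow_succ, hp]; norm_num
        rw [hp2]
        linear_combination ihv - hv

/-- locate a point of [0,1] in some piece -/
lemma find_piece {k : ℕ} (hk : 1 ≤ k) {x : ℝ} (hx : x ∈ Set.Icc (0:ℝ) 1) :
    ∃ j, j < 2*k ∧ x ∈ Set.Icc (cc k j) (cc k (j+1)) := by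
  classical
  have hP0 : cc k 0 ≤ x := by rw [cc_zero]; exact hx.1
  set g := Nat.findGreatest (fun j => cc k j ≤ x) (2*k) with hg
  have hPg : cc k g ≤ x :=
    Nat.findGreatest_spec (P := fun j => cc k j ≤ x) (Nat.zero_le _) hP0
  have hgle : g ≤ 2*k := Nat.findGreatest_le _
  rcases eq_or_lt_of_le hgle with hge | hglt
  · refine ⟨2*k-1, by omega, ?_, ?_⟩
    · have : cc k (2*k-1) ≤ cc k g := cc_mono hk (by omega)
      linarith
    · rw [show 2*k-1+1 = 2*k by omega, cc_last hk]
      exact hx.2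
  · refine ⟨g, hglt, hPg, ?_⟩
    by_contra hcon
    push_neg at hcon
    exact absurd hcon.le (Nat.findGreatest_is_greatest (Nat.lt_succ_self g) (by omega))

/-- the central bound: the difference of cumulative values is at most `1/(2k-1)` -/
lemma Dv_bound {k : ℕ} (hk : 1 ≤ k) {t : ℝ} (ht : t ∈ Set.Icc (0:ℝ) 1) :
    |FF k 0 t - FF k 1 t| ≤ 1/((2*k:ℝ)-1) := by
  have hN := hNpos hk
  obtain ⟨j, hj, htj⟩ := find_piece hk ht
  have hbd : ∀ j', j' ≤ 2*k → |FF k 0 (cc k j') - FF k 1 (cc k j')| ≤ 1/((2*k:ℝ)-1) := by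
    intro j' hj'
    rw [Dv_cc hk j' hj']
    split
    · rw [abs_zero]; exact (one_div_pos.2 hN).le
    · rw [abs_div, abs_pow, abs_neg, abs_one, one_pow, abs_of_pos hN]
  -- the unowned player's cumulative value is constant on the piece
  have hconst : ∀ i < 2, j % 2 ≠ i → FF k i t = FF k i (cc k j) ∧
      FF k i t = FF k i (cc k (j+1)) := by
    intro i hi hne
    have e1 : FF k i t - FF k i (cc k j) = ∫ x in (cc k j)..t, dd k i x := by
      unfold FF
      rw [← intervalIntegral.integral_add_adjacent_intervals (dd_intble k i 0 (cc k j))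
        (dd_intble k i (cc k j) t)]
      ring
    have e2 : FF k i (cc k (j+1)) - FF k i t = ∫ x in t..(cc k (j+1)), dd k i x := by
      unfold FF
      rw [← intervalIntegral.integral_add_adjacent_intervals (dd_intble k i 0 t)
        (dd_intble k i t (cc k (j+1)))]
      ring
    have z1 : ∫ x in (cc k j)..t, dd k i x = 0 := by
      apply intervalIntegral.integral_congr (g := fun _ => 0) ?_ |>.trans (by simp)
      intro x hx
      rw [uIcc_of_le htj.1] at hx
      exact dd_zero_on hk hj hne ⟨hx.1, le_trans hx.2 htj.2⟩
    have z2 : ∫ x in t..(cc k (j+1)), dd k i x = 0 := by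
      apply intervalIntegral.integral_congr (g := fun _ => 0) ?_ |>.trans (by simp)
      intro x hx
      rw [uIcc_of_le htj.2] at hx
      exact dd_zero_on hk hj hne ⟨le_trans htj.1 hx.1, hx.2⟩
    constructor
    · rw [z1] at e1; linarith
    · rw [z2] at e2; linarith
  have hb1 := hbd j (by omega)
  have hb2 := hbd (j+1) (by omega)
  have hmono1 : FF k (j % 2) (cc k j) ≤ FF k (j % 2) t := FF_mono hk _ htj.1
  have hmono2 : FF k (j % 2) t ≤ FF k (j % 2) (cc k (j+1)) := FF_mono hk _ htj.2
  rcases Nat.even_or_odd j with he | ho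
  · have hm : j % 2 = 0 := Nat.even_iff.1 he
    obtain ⟨hc1, hc2⟩ := hconst 1 (by omega) (by omega)
    rw [hm] at hmono1 hmono2
    rw [abs_le] at hb1 hb2 ⊢
    exact ⟨by linarith [hb1.1], by linarith [hb2.2]⟩
  · have hm : j % 2 = 1 := Nat.odd_iff.1 ho
    obtain ⟨hc1, hc2⟩ := hconst 0 (by omega) (by omega)
    rw [hm] at hmono1 hmono2
    rw [abs_le] at hb1 hb2 ⊢
    exact ⟨by linarith [hb2.1], by linarith [hb1.2]⟩

lemma FF_cc_sum {k : ℕ} (hk : 1 ≤ k) (i : ℕ) : ∀ J, J ≤ 2*k →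
    FF k i (cc k J) = ∑ j ∈ Finset.range J,
      (if j % 2 = i then 2*(cc k (j+1) - cc k j) else 0) := by
  intro J
  induction J with
  | zero => intro _; simp [cc_zero, FF_zero]
  | succ J ih =>
    intro hJ
    rw [FF_cc_succ hk i (by omega), ih (by omega), Finset.sum_range_succ]

lemma FF_total {k : ℕ} (hk : 1 ≤ k) {i : ℕ} (hi : i < 2) : FF k i 1 = 1 := by
  have h := FF_cc_sum hk i (2*k) le_rfl
  rw [cc_last hk] at h
  rw [h, sum_pair']
  interval_cases i
  · have : ∀ m ∈ Finset.range k,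
        ((if (2*m) % 2 = 0 then 2*(cc k (2*m+1) - cc k (2*m)) else 0)
          + (if (2*m+1) % 2 = 0 then 2*(cc k (2*m+1+1) - cc k (2*m+1)) else 0))
        = 2*(cc k (2*m+0+1) - cc k (2*m+0)) := by
      intro m _
      rw [if_pos (by omega), if_neg (by omega)]
      simp
    rw [Finset.sum_congr rfl this]
    exact sum_owned hk (i := 0) (by omega)
  · have : ∀ m ∈ Finset.range k,
        ((if (2*m) % 2 = 1 then 2*(cc k (2*m+1) - cc k (2*m)) else 0)
          + (if (2*m+1) % 2 = 1 then 2*(cc k (2*m+1+1) - cc k (2*m+1)) else 0))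
        = 2*(cc k (2*m+1+1) - cc k (2*m+1)) := by
      intro m _
      rw [if_neg (by omega), if_pos (by omega)]
      simp
    rw [Finset.sum_congr rfl this]
    exact sum_owned hk (i := 1) (by omega)

/-- An `n`-player cake-cutting instance: continuous nonnegative density functions
on `[0,1]`, each of total integral `1`. -/
structure CakeInstance (n : ℕ) where
  d : Fin n → ℝ → ℝ
  cont : ∀ i, ContinuousOn (d i) (Set.Icc 0 1)
  nonneg : ∀ i, ∀ x ∈ Set.Icc (0:ℝ) 1, 0 ≤ d i x
  total : ∀ i, ∫ x in (0:ℝ)..1, d i x = 1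

namespace CakeInstance

/-- Value of player `i` for the interval `[a,b]`. -/
noncomputable def ival {n : ℕ} (C : CakeInstance n) (i : Fin n) (a b : ℝ) : ℝ :=
  ∫ x in a..b, C.d i x

/-- Value of player `i` for a set `S`. -/
noncomputable def sval {n : ℕ} (C : CakeInstance n) (i : Fin n) (S : Set ℝ) : ℝ :=
  ∫ x in S, C.d i x

end CakeInstance

/-- A contiguous allocation: weakly increasing cut points `x 0 = 0 ≤ … ≤ x n = 1`
together with a permutation `σ` assigning the `j`-th interval `[x j, x (j+1)]`
to player `σ j`. -/
structure ContigAlloc (n : ℕ) where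
  x : Fin (n+1) → ℝ
  mono : Monotone x
  first : x 0 = 0
  last : x (Fin.last n) = 1
  σ : Equiv.Perm (Fin n)

/-- The (closed) interval received by player `i` in a contiguous allocation. -/
def cpiece {n : ℕ} (A : ContigAlloc n) (i : Fin n) : Set ℝ :=
  Set.Icc (A.x (A.σ.symm i).castSucc) (A.x (A.σ.symm i).succ)

/-- Value of player `i` for the interval received by player `j`. -/
noncomputable def cval {n : ℕ} (C : CakeInstance n) (A : ContigAlloc n) (i j : Fin n) : ℝ :=
  C.ival i (A.x (A.σ.symm j).castSucc) (A.x (A.σ.symm j).succ)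

/-- Utilitarian welfare of a contiguous allocation. -/
noncomputable def cWelfare {n : ℕ} (C : CakeInstance n) (A : ContigAlloc n) : ℝ :=
  ∑ i, cval C A i i

/-- Egalitarian welfare of a contiguous allocation. -/
noncomputable def cEgal {n : ℕ} (C : CakeInstance n) (A : ContigAlloc n) : ℝ :=
  ⨅ i, cval C A i i

/-- A contiguous allocation is envy-free if nobody prefers another player's interval. -/
def cEnvyFree {n : ℕ} (C : CakeInstance n) (A : ContigAlloc n) : Prop :=
  ∀ i j, cval C A i j ≤ cval C A i i

/-- A `k`-piece allocation: each player `i` receives the union of (at most) `k`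
closed intervals `[lo i m, hi i m] ⊆ [0,1]` (possibly degenerate); all these
intervals are pairwise non-overlapping and together they cover `[0,1]`. -/
structure KPieceAlloc (n k : ℕ) where
  lo : Fin n → Fin k → ℝ
  hi : Fin n → Fin k → ℝ
  le : ∀ i m, lo i m ≤ hi i m
  sub : ∀ i m, Set.Icc (lo i m) (hi i m) ⊆ Set.Icc (0:ℝ) 1
  nonoverlap : ∀ i m i' m', (i, m) ≠ (i', m') →
      Set.Ioo (lo i m) (hi i m) ∩ Set.Ioo (lo i' m') (hi i' m') = ∅
  cover : (⋃ i, ⋃ m, Set.Icc (lo i m) (hi i m)) = Set.Icc (0:ℝ) 1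

/-- Value of player `i` for the portion received by player `j` in a `k`-piece allocation. -/
noncomputable def kval {n k : ℕ} (C : CakeInstance n) (A : KPieceAlloc n k) (i j : Fin n) : ℝ :=
  ∑ m, C.ival i (A.lo j m) (A.hi j m)

/-- Utilitarian welfare of a `k`-piece allocation. -/
noncomputable def kWelfare {n k : ℕ} (C : CakeInstance n) (A : KPieceAlloc n k) : ℝ :=
  ∑ i, kval C A i i

/-- Egalitarian welfare of a `k`-piece allocation. -/
noncomputable def kEgal {n k : ℕ} (C : CakeInstance n) (A : KPieceAlloc n k) : ℝ :=
  ⨅ i, kval C A i i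

/-- A `k`-piece allocation is envy-free if nobody prefers another player's portion. -/
def kEnvyFree {n k : ℕ} (C : CakeInstance n) (A : KPieceAlloc n k) : Prop :=
  ∀ i j, kval C A i j ≤ kval C A i i

/-- A witness that an `n`-player cake-cutting instance lies in the class `X(k)`:
cut points `0 = c 0 < c 1 < … < c (n*k) = 1` and an ownership map under which each
player owns exactly `k` of the pieces `[c j, c (j+1)]` and values the unowned pieces `0`. -/
structure XkWitness {n : ℕ} (C : CakeInstance n) (k : ℕ) where
  c : Fin (n*k+1) → ℝ
  mono : StrictMono c
  first : c 0 = 0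
  last : c (Fin.last (n*k)) = 1
  owner : Fin (n*k) → Fin n
  ownCount : ∀ i : Fin n, (Finset.univ.filter fun j => owner j = i).card = k
  zeroVal : ∀ (i : Fin n) (j : Fin (n*k)), owner j ≠ i →
      C.ival i (c j.castSucc) (c j.succ) = 0

/-- The `j`-th owned piece, as a set. -/
def XkWitness.pieceSet {n k : ℕ} {C : CakeInstance n} (W : XkWitness C k)
    (j : Fin (n*k)) : Set ℝ :=
  Set.Icc (W.c j.castSucc) (W.c j.succ)

/-- Value of player `i` for the `j`-th owned piece. -/
noncomputable def XkWitness.pieceVal {n k : ℕ} {C : CakeInstance n} (W : XkWitness C k)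
    (i : Fin n) (j : Fin (n*k)) : ℝ :=
  C.ival i (W.c j.castSucc) (W.c j.succ)

/-- A `k`-piece allocation gives each player exactly the pieces he owns:
every owned piece occurs among its owner's allocated intervals. -/
def XkWitness.givesOwnedPieces {n k : ℕ} {C : CakeInstance n} (W : XkWitness C k)
    (A : KPieceAlloc n k) : Prop :=
  ∀ j : Fin (n*k), ∃ m : Fin k,
    A.lo (W.owner j) m = W.c j.castSucc ∧ A.hi (W.owner j) m = W.c j.succ

noncomputable def mkC (k : ℕ) (hk : 1 ≤ k) : CakeInstance 2 where
  d i := dd k i.val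
  cont i := (dd_cont k i.val).continuousOn
  nonneg i x _ := dd_nonneg hk i.val x
  total i := FF_total hk i.isLt

noncomputable def mkA (k : ℕ) (hk : 1 ≤ k) : KPieceAlloc 2 k where
  lo i m := cc k (2*m.val + i.val)
  hi i m := cc k (2*m.val + i.val + 1)
  le i m := cc_mono hk (Nat.le_succ _)
  sub i m := Set.Icc_subset_Icc (cc_nonneg hk _) (cc_le_one hk _)
  nonoverlap := by
    intro i m i' m' hne
    have hne2 : 2*m.val + i.val ≠ 2*m'.val + i'.val := by
      intro h
      apply hne
      have hi := i.isLt
      have hi' := i'.isLt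
      have hmm : i.val = i'.val ∧ m.val = m'.val := by omega
      have h1 : i = i' := Fin.ext hmm.1
      have h2 : m = m' := Fin.ext hmm.2
      rw [h1, h2]
    rw [Set.eq_empty_iff_forall_notMem]
    rintro x ⟨⟨_, hx1⟩, ⟨hx2, _⟩⟩
    rcases lt_or_gt_of_ne hne2 with h | h
    · have : cc k (2*m.val + i.val + 1) ≤ cc k (2*m'.val + i'.val) := cc_mono hk (by omega)
      linarith
    · have : cc k (2*m'.val + i'.val + 1) ≤ cc k (2*m.val + i.val) := cc_mono hk (by omega)
      linarith
  cover := by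
    apply Set.Subset.antisymm
    · exact Set.iUnion_subset fun i => Set.iUnion_subset fun m =>
        Set.Icc_subset_Icc (cc_nonneg hk _) (cc_le_one hk _)
    · intro x hx
      obtain ⟨j, hj, hxj⟩ := find_piece hk hx
      refine Set.mem_iUnion.2 ⟨⟨j % 2, by omega⟩, Set.mem_iUnion.2 ⟨⟨j / 2, by omega⟩, ?_⟩⟩
      have hjj : 2*(j/2) + j % 2 = j := Nat.div_add_mod j 2
      show x ∈ Set.Icc (cc k (2*(j/2) + j % 2)) (cc k (2*(j/2) + j % 2 + 1))
      rw [hjj]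
      exact hxj

noncomputable def mkW (k : ℕ) (hk : 1 ≤ k) : XkWitness (mkC k hk) k where
  c j := cc k j.val
  mono := fun a b hab => cc_lt hk hab (Nat.lt_succ_iff.1 b.isLt)
  first := cc_zero k
  last := cc_last hk
  owner j := ⟨j.val % 2, by omega⟩
  ownCount := by
    intro i
    have hcard : (Finset.univ.filter fun j : Fin (2*k) =>
        (⟨j.val % 2, by omega⟩ : Fin 2) = i).card = (Finset.univ : Finset (Fin k)).card := by
      refine Finset.card_bij' (fun (j : Fin (2*k)) _ => (⟨j.val / 2, by omega⟩ : Fin k))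
        (fun (m : Fin k) _ => (⟨2*m.val + i.val, by omega⟩ : Fin (2*k))) ?_ ?_ ?_ ?_
      · intro a ha
        exact Finset.mem_univ _
      · intro m _
        rw [Finset.mem_filter]
        refine ⟨Finset.mem_univ _, ?_⟩
        have hi := i.isLt
        apply Fin.ext
        show (2*m.val + i.val) % 2 = i.val
        omega
      · intro a ha
        rw [Finset.mem_filter] at ha
        have h2 : a.val % 2 = i.val := congrArg Fin.val ha.2
        apply Fin.ext
        show 2*(a.val/2) + i.val = a.val
        omega
      · intro m _
        apply Fin.ext
        show (2*m.val + i.val)/2 = m.val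
        have hi := i.isLt
        omega
    rw [hcard, Finset.card_univ, Fintype.card_fin]
  zeroVal := by
    intro i j hne
    have hni : ¬ (j.val % 2 = i.val) := fun h => hne (Fin.ext h)
    show (∫ x in (cc k j.val)..(cc k (j.val+1)), dd k i.val x) = 0
    rw [dd_piece_integral hk i.val j.isLt, if_neg hni]

lemma mkA_gives (k : ℕ) (hk : 1 ≤ k) : (mkW k hk).givesOwnedPieces (mkA k hk) := by
  intro j
  refine ⟨⟨j.val / 2, by omega⟩, ?_, ?_⟩
  · show cc k (2*(j.val/2) + j.val % 2) = cc k j.val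
    rw [Nat.div_add_mod]
  · show cc k (2*(j.val/2) + j.val % 2 + 1) = cc k (j.val + 1)
    rw [Nat.div_add_mod]

lemma kval_own (k : ℕ) (hk : 1 ≤ k) (i : Fin 2) :
    kval (mkC k hk) (mkA k hk) i i = 1 := by
  unfold kval
  have hterm : ∀ m : Fin k, (mkC k hk).ival i ((mkA k hk).lo i m) ((mkA k hk).hi i m)
      = 2*(cc k (2*m.val + i.val + 1) - cc k (2*m.val + i.val)) := by
    intro m
    show (∫ x in (cc k (2*m.val+i.val))..(cc k (2*m.val+i.val+1)), dd k i.val x) = _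
    rw [dd_piece_integral hk i.val (by have := m.isLt; have := i.isLt; omega)]
    rw [if_pos (by have := i.isLt; omega)]
  rw [Finset.sum_congr rfl (fun m _ => hterm m)]
  rw [Fin.sum_univ_eq_sum_range (fun m => 2*(cc k (2*m + i.val + 1) - cc k (2*m + i.val)))]
  exact sum_owned hk i.isLt

noncomputable def mkB (k : ℕ) (hk : 1 ≤ k) : ContigAlloc 2 where
  x := ![0, cc k 1, 1]
  mono := by
    rw [Fin.monotone_iff_le_succ]
    intro i
    have hc1 : 0 ≤ cc k 1 := cc_nonneg hk 1
    have hc2 : cc k 1 ≤ 1 := cc_le_one hk 1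
    fin_cases i <;> simpa using by assumption
  first := rfl
  last := rfl
  σ := 1

/-- For every `k ≥ 1` there is a 2-player instance in `X(k)` in which
the `k`-piece allocation giving each player his own pieces has utilitarian welfare `2`,
every contiguous allocation has utilitarian welfare at most `2k/(2k−1)`, this bound is
attained, and consequently the ratio of the two optima is `2 − 1/k`. -/
theorem poiu_two_lower_bound (k : ℕ) (hk : 1 ≤ k) :
    ∃ (C : CakeInstance 2) (W : XkWitness C k),
      (∃ A : KPieceAlloc 2 k, W.givesOwnedPieces A ∧ kWelfare C A = 2) ∧
      (∀ B : ContigAlloc 2, cWelfare C B ≤ (2*k : ℝ) / (2*(k:ℝ) - 1)) ∧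
      (∃ B : ContigAlloc 2, cWelfare C B = (2*k : ℝ) / (2*(k:ℝ) - 1)) ∧
      (2 : ℝ) / ((2*k : ℝ) / (2*(k:ℝ) - 1)) = 2 - 1/(k:ℝ) := by
  have hN := hNpos hk
  have hkR : (1:ℝ) ≤ (k:ℝ) := by exact_mod_cast hk
  have hkne : (k:ℝ) ≠ 0 := by linarith
  have hNne : (2*(k:ℝ)-1) ≠ 0 := by linarith
  have hbound_eq : (2*k : ℝ) / (2*(k:ℝ) - 1) = 1 + 1/((2*k:ℝ)-1) := by
    field_simp
    ring
  refine ⟨mkC k hk, mkW k hk, ⟨mkA k hk, mkA_gives k hk, ?_⟩, ?_, ?_, ?_⟩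
  · -- k-piece welfare is 2
    unfold kWelfare
    rw [Fin.sum_univ_two, kval_own k hk 0, kval_own k hk 1]
    norm_num
  · -- every contiguous allocation has welfare at most 2k/(2k-1)
    intro B
    have hx0 : B.x 0 = 0 := B.first
    have hx2 : B.x 2 = 1 := B.last
    have ht1 : B.x 0 ≤ B.x 1 := B.mono (by decide)
    have ht2 : B.x 1 ≤ B.x 2 := B.mono (by decide)
    have ht : B.x 1 ∈ Set.Icc (0:ℝ) 1 := ⟨hx0 ▸ ht1, hx2 ▸ ht2⟩
    have hD := abs_le.1 (Dv_bound hk ht)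
    have h2f : ∀ a : Fin 2, a = 0 ∨ a = 1 := by decide
    have hsplit : ∀ i : ℕ, i < 2 →
        FF k i (B.x 1) + ∫ x in (B.x 1)..(1:ℝ), dd k i x = 1 := by
      intro i hi
      have := intervalIntegral.integral_add_adjacent_intervals
        (dd_intble k i 0 (B.x 1)) (dd_intble k i (B.x 1) 1)
      rw [show ((∫ x in (0:ℝ)..(B.x 1), dd k i x) = FF k i (B.x 1)) from rfl] at this
      rw [this]
      exact FF_total hk hi
    have hwelf : cWelfare (mkC k hk) B = cval (mkC k hk) B 0 0 + cval (mkC k hk) B 1 1 :=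
      Fin.sum_univ_two _
    rcases h2f (B.σ.symm 0) with ha | ha
    · have hb : B.σ.symm 1 = 1 := by
        rcases h2f (B.σ.symm 1) with hb | hb
        · exact absurd (B.σ.symm.injective (ha.trans hb.symm)) (by decide)
        · exact hb
      have e0 : cval (mkC k hk) B 0 0 = FF k 0 (B.x 1) := by
        unfold cval CakeInstance.ival
        rw [ha]
        show (∫ x in (B.x ((0:Fin 2).castSucc))..(B.x ((0:Fin 2).succ)), dd k 0 x) = _
        rw [show ((0:Fin 2).castSucc) = (0:Fin 3) from rfl,
          show ((0:Fin 2).succ) = (1:Fin 3) from rfl, hx0]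
        rfl
      have e1 : cval (mkC k hk) B 1 1 = 1 - FF k 1 (B.x 1) := by
        unfold cval CakeInstance.ival
        rw [hb]
        show (∫ x in (B.x ((1:Fin 2).castSucc))..(B.x ((1:Fin 2).succ)), dd k 1 x) = _
        rw [show ((1:Fin 2).castSucc) = (1:Fin 3) from rfl,
          show ((1:Fin 2).succ) = (2:Fin 3) from rfl, hx2]
        have := hsplit 1 (by omega)
        linarith
      rw [hwelf, e0, e1, hbound_eq]
      linarith [hD.2]
    · have hb : B.σ.symm 1 = 0 := by
        rcases h2f (B.σ.symm 1) with hb | hb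
        · exact hb
        · exact absurd (B.σ.symm.injective (ha.trans hb.symm)) (by decide)
      have e0 : cval (mkC k hk) B 0 0 = 1 - FF k 0 (B.x 1) := by
        unfold cval CakeInstance.ival
        rw [ha]
        show (∫ x in (B.x ((1:Fin 2).castSucc))..(B.x ((1:Fin 2).succ)), dd k 0 x) = _
        rw [show ((1:Fin 2).castSucc) = (1:Fin 3) from rfl,
          show ((1:Fin 2).succ) = (2:Fin 3) from rfl, hx2]
        have := hsplit 0 (by omega)
        linarith
      have e1 : cval (mkC k hk) B 1 1 = FF k 1 (B.x 1) := by
        unfold cval CakeInstance.ival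
        rw [hb]
        show (∫ x in (B.x ((0:Fin 2).castSucc))..(B.x ((0:Fin 2).succ)), dd k 1 x) = _
        rw [show ((0:Fin 2).castSucc) = (0:Fin 3) from rfl,
          show ((0:Fin 2).succ) = (1:Fin 3) from rfl, hx0]
        rfl
      rw [hwelf, e0, e1, hbound_eq]
      linarith [hD.1]
  · -- attainment
    have hc1 : 0 ≤ cc k 1 := cc_nonneg hk 1
    have hc2 : cc k 1 ≤ 1 := cc_le_one hk 1
    refine ⟨mkB k hk, ?_⟩
    · have hFF0 : FF k 0 (cc k 1) = 1/((2*k:ℝ)-1) := by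
        have h := FF_cc_succ hk 0 (show 0 < 2*k by omega)
        rw [if_pos (by omega), piece_val hk (show 0 < 2*k by omega),
          if_pos (Or.inl rfl), cc_zero, FF_zero] at h
        simpa using h
      have hFF1 : FF k 1 (cc k 1) = 0 := by
        have h := FF_cc_succ hk 1 (show 0 < 2*k by omega)
        rw [if_neg (by omega), cc_zero, FF_zero] at h
        simpa using h
      have hwelf : cWelfare (mkC k hk) (mkB k hk)
          = cval (mkC k hk) (mkB k hk) 0 0 + cval (mkC k hk) (mkB k hk) 1 1 :=
        Fin.sum_univ_two _
      have e0 : cval (mkC k hk) (mkB k hk) 0 0 = FF k 0 (cc k 1) := rfl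
      have e1 : cval (mkC k hk) (mkB k hk) 1 1 = 1 - FF k 1 (cc k 1) := by
        show (∫ x in (cc k 1)..(1:ℝ), dd k 1 x) = _
        have h := intervalIntegral.integral_add_adjacent_intervals
          (dd_intble k 1 0 (cc k 1)) (dd_intble k 1 (cc k 1) 1)
        rw [show ((∫ x in (0:ℝ)..(cc k 1), dd k 1 x) = FF k 1 (cc k 1)) from rfl,
          show ((∫ x in (0:ℝ)..(1:ℝ), dd k 1 x) = FF k 1 1) from rfl,
          FF_total hk (i := 1) (by omega)] at h
        linarith
      rw [hwelf, e0, e1, hFF0, hFF1, hbound_eq]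
      ring
  · -- the ratio
    rw [div_div_eq_mul_div]
    field_simp
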